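/- arXiv:2008.00739 — 2 statements merged into one kernel-verified Lean document; each statement's English description precedes it below -/
import Mathlib

section
/- Let v, u, u' be three distinct points in the plane in general position with pairwise distances at most r. If u ⪯_v u', then it is not the case that u ⪯_{u'} v. -/
open Metric

noncomputable section

/-- Points of the plane. -/
abbrev Pt := EuclideanSpace ℝ (Fin 2)

/-- `Zd r p` : the closed disk (communication zone) of radius `r` centered at `p`. -/
def Zd (r : ℝ) (p : Pt) : Set Pt := Metric.closedBall p r

/-- `Zb r p` : the boundary circle of the communication zone of `p`. -/
def Zb (r : ℝ) (p : Pt) : Set Pt := Metric.sphere p r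

/-- The arc-containment relation `a ⪯_v b`. -/
def arcLe (r : ℝ) (v a b : Pt) : Prop := Zd r a ∩ Zb r v ⊆ Zd r b ∩ Zb r v

/-- `u` is a neighbor of `v`. -/
def Nbr (r : ℝ) (v u : Pt) : Prop := u ≠ v ∧ dist u v ≤ r

/-- General position: no three distinct points of `V` are collinear. -/
def GenPos (V : Set Pt) : Prop :=
  ∀ a ∈ V, ∀ b ∈ V, ∀ c ∈ V, a ≠ b → a ≠ c → b ≠ c → ¬ Collinear ℝ ({a, b, c} : Set Pt)

/-- `u` is a maximal neighbor of `v` within `V`. -/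
def MaxNbr (V : Set Pt) (r : ℝ) (v u : Pt) : Prop :=
  u ∈ V ∧ Nbr r v u ∧ ∀ u' ∈ V, u' ≠ u → Nbr r v u' → ¬ arcLe r v u u'

/-- `v` is an interior node of `V`. -/
def IsInterior (V : Set Pt) (r : ℝ) (v : Pt) : Prop :=
  ∀ z ∈ Zb r v, ∃ v' ∈ V, v' ≠ v ∧ z ∈ Zd r v'

/-- Counterclockwise rotation by `π/2`. -/
def rot90 (x : Pt) : Pt := (WithLp.equiv 2 (Fin 2 → ℝ)).symm ![-(x 1), x 0]

/-- The boundary intersection `CCW(v, v')` of the circles `∂Z(v)` and `∂Z(v')`: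
traversing from `CCW(v,v')` to `CW(v,v')` clockwise along `∂Z(v)` sweeps an angle `< π`. -/
def ccwPt (r : ℝ) (v v' : Pt) : Pt :=
  midpoint ℝ v v' + (Real.sqrt (r ^ 2 - (dist v v' / 2) ^ 2) / dist v v') • rot90 (v' - v)

/-- The boundary intersection `CW(v, v')`. -/
def cwPt (r : ℝ) (v v' : Pt) : Pt :=
  midpoint ℝ v v' - (Real.sqrt (r ^ 2 - (dist v v' / 2) ^ 2) / dist v v') • rot90 (v' - v)

/-- A communication wheel of `v` with `m` rim nodes `w 0, …, w (m-1)` (indices mod `m`). -/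
def IsCommWheel (V : Set Pt) (r : ℝ) (v : Pt) (m : ℕ) (w : ZMod m → Pt) : Prop :=
  3 ≤ m ∧ Function.Injective w ∧
  (∀ i, MaxNbr V r v (w i)) ∧
  (∀ i, dist (w i) (w (i + 1)) ≤ r) ∧
  (∀ i, ccwPt r v (w i) ∈ Zd r (w (i + 1)) ∧ cwPt r v (w i) ∈ Zd r (w (i - 1)))


open RealInnerProductSpace

section Aux

private lemma rot90_inner' (x : Pt) : ⟪x, rot90 x⟫ = 0 := by
  simp [rot90, PiLp.inner_apply, Fin.sum_univ_two]
  ring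

private lemma rot90_norm_sq' (x : Pt) : ⟪rot90 x, rot90 x⟫ = ⟪x, x⟫ := by
  simp [rot90, PiLp.inner_apply, Fin.sum_univ_two, EuclideanSpace.norm_eq]
  ring_nf

private lemma circle_pts (r : ℝ) (hr : 0 < r) (v v' : Pt) (hne : v ≠ v') (hd : dist v v' ≤ r) :
    dist (ccwPt r v v') v = r ∧ dist (ccwPt r v v') v' = r ∧
    dist (cwPt r v v') v = r ∧ dist (cwPt r v v') v' = r := by
  set m : Pt := midpoint ℝ v v' with hm
  set w : Pt := rot90 (v' - v) with hw
  set s : ℝ := Real.sqrt (r ^ 2 - (dist v v' / 2) ^ 2) / dist v v' with hs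
  have hd0 : (0:ℝ) < dist v v' := dist_pos.2 hne
  have hdn : dist v v' = ‖v' - v‖ := by rw [dist_eq_norm, norm_sub_rev]
  have hX : (0:ℝ) ≤ r ^ 2 - (dist v v' / 2) ^ 2 := by nlinarith [dist_nonneg (x := v) (y := v')]
  have hww : ⟪w, w⟫ = ‖v' - v‖ ^ 2 := by
    rw [hw, rot90_norm_sq', real_inner_self_eq_norm_sq]
  have hsq : s ^ 2 * ⟪w, w⟫ = r ^ 2 - ‖v' - v‖ ^ 2 / 4 := by
    rw [hww, hs, div_pow, Real.sq_sqrt hX, ← hdn]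
    field_simp
    ring
  have horth : ⟪v' - v, w⟫ = 0 := rot90_inner' _
  have main : ∀ c t : ℝ, c ^ 2 = 1 / 4 → t ^ 2 = s ^ 2 → ‖c • (v' - v) + t • w‖ = r := by
    intro c t hc ht
    have h2 : ‖c • (v' - v) + t • w‖ ^ 2 = r ^ 2 := by
      rw [norm_add_sq_real, real_inner_smul_left, real_inner_smul_right, horth,
        norm_smul, norm_smul, mul_pow, mul_pow, Real.norm_eq_abs, Real.norm_eq_abs, sq_abs, sq_abs, hc, ht,
        ← real_inner_self_eq_norm_sq w, hsq]
      ring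
    have hn : (0:ℝ) ≤ ‖c • (v' - v) + t • w‖ := norm_nonneg _
    nlinarith [h2, hn, hr]
  have d1 : ccwPt r v v' - v = (2⁻¹ : ℝ) • (v' - v) + s • w := by
    rw [ccwPt, ← hm, ← hw, ← hs, hm, midpoint_eq_smul_add, invOf_eq_inv]; module
  have d2 : ccwPt r v v' - v' = (-(2⁻¹) : ℝ) • (v' - v) + s • w := by
    rw [ccwPt, ← hm, ← hw, ← hs, hm, midpoint_eq_smul_add, invOf_eq_inv]; module
  have d3 : cwPt r v v' - v = (2⁻¹ : ℝ) • (v' - v) + (-s) • w := by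
    rw [cwPt, ← hm, ← hw, ← hs, hm, midpoint_eq_smul_add, invOf_eq_inv]; module
  have d4 : cwPt r v v' - v' = (-(2⁻¹) : ℝ) • (v' - v) + (-s) • w := by
    rw [cwPt, ← hm, ← hw, ← hs, hm, midpoint_eq_smul_add, invOf_eq_inv]; module
  refine ⟨?_, ?_, ?_, ?_⟩ <;> rw [dist_eq_norm]
  · rw [d1]; exact main _ _ (by norm_num) rfl
  · rw [d2]; exact main _ _ (by norm_num) rfl
  · rw [d3]; exact main _ _ (by norm_num) (by ring)
  · rw [d4]; exact main _ _ (by norm_num) (by ring)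

private lemma key (r : ℝ) (hr : 0 < r) (v u u' : Pt) (hvu : v ≠ u) (hd : dist v u ≤ r)
    (hp : dist (ccwPt r v u) u' ≤ r) (hq : dist (cwPt r v u) u' ≤ r) :
    ⟪u' - v, u' - u⟫ ≤ 0 := by
  set m : Pt := midpoint ℝ v u with hm
  set w : Pt := rot90 (u - v) with hw
  set s : ℝ := Real.sqrt (r ^ 2 - (dist v u / 2) ^ 2) / dist v u with hs
  have hd0 : (0:ℝ) < dist v u := dist_pos.2 hvu
  have hdn : dist v u = ‖u - v‖ := by rw [dist_eq_norm, norm_sub_rev]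
  have hX : (0:ℝ) ≤ r ^ 2 - (dist v u / 2) ^ 2 := by nlinarith [dist_nonneg (x := v) (y := u)]
  have hsq : s ^ 2 * ⟪w, w⟫ = r ^ 2 - ‖u - v‖ ^ 2 / 4 := by
    rw [hw, rot90_norm_sq', real_inner_self_eq_norm_sq, hs, div_pow, Real.sq_sqrt hX, ← hdn]
    field_simp
    ring
  have hpw : ccwPt r v u - u' = (m - u') + s • w := by
    rw [ccwPt, ← hm, ← hw, ← hs]; abel
  have hqw : cwPt r v u - u' = (m - u') - s • w := by
    rw [cwPt, ← hm, ← hw, ← hs]; abel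
  have hpn : ‖(m - u') + s • w‖ ≤ r := by rw [← hpw, ← dist_eq_norm]; exact hp
  have hqn : ‖(m - u') - s • w‖ ≤ r := by rw [← hqw, ← dist_eq_norm]; exact hq
  have hpn2 : ‖(m - u') + s • w‖ ^ 2 ≤ r ^ 2 := by
    have := norm_nonneg ((m - u') + s • w); nlinarith
  have hqn2 : ‖(m - u') - s • w‖ ^ 2 ≤ r ^ 2 := by
    have := norm_nonneg ((m - u') - s • w); nlinarith
  have hww : ‖w‖ ^ 2 = ⟪w, w⟫ := (real_inner_self_eq_norm_sq w).symm
  have e1 : ‖(m - u') + s • w‖ ^ 2 = ‖m - u'‖ ^ 2 + 2 * (s * ⟪m - u', w⟫) + s ^ 2 * ⟪w, w⟫ := by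
    rw [norm_add_sq_real, real_inner_smul_right, norm_smul, mul_pow, ← hww]
    simp [abs_mul_abs_self, sq_abs]
  have e2 : ‖(m - u') - s • w‖ ^ 2 = ‖m - u'‖ ^ 2 - 2 * (s * ⟪m - u', w⟫) + s ^ 2 * ⟪w, w⟫ := by
    rw [norm_sub_sq_real, real_inner_smul_right, norm_smul, mul_pow, ← hww]
    simp [abs_mul_abs_self, sq_abs]
  have hmu : ‖m - u'‖ ^ 2 ≤ ‖u - v‖ ^ 2 / 4 := by linarith
  have hA : u' - v = (u' - m) + (2:ℝ)⁻¹ • (u - v) := by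
    rw [hm, midpoint_eq_smul_add, invOf_eq_inv]; module
  have hB : u' - u = (u' - m) - (2:ℝ)⁻¹ • (u - v) := by
    rw [hm, midpoint_eq_smul_add, invOf_eq_inv]; module
  have hid : ⟪u' - v, u' - u⟫ = ‖u' - m‖ ^ 2 - ‖u - v‖ ^ 2 / 4 := by
    rw [hA, hB, ← real_inner_self_eq_norm_sq, ← real_inner_self_eq_norm_sq]
    simp only [inner_add_left, inner_sub_right, real_inner_smul_left, real_inner_smul_right,
      real_inner_comm (u - v) (u' - m)]
    ring
  have hnm : ‖u' - m‖ = ‖m - u'‖ := norm_sub_rev _ _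
  rw [hid, hnm]
  linarith

end Aux

/-- Lemma: `u ⪯_v u'` implies `¬ (u ⪯_{u'} v)`. -/
theorem stmt_2 (r : ℝ) (hr : 0 < r) (v u u' : Pt)
    (hvu : v ≠ u) (hvu' : v ≠ u') (huu' : u ≠ u')
    (hcol : ¬ Collinear ℝ ({v, u, u'} : Set Pt))
    (h1 : dist v u ≤ r) (h2 : dist v u' ≤ r) (h3 : dist u u' ≤ r)
    (hle : arcLe r v u u') :
    ¬ arcLe r u' u v := by
  intro hcontra
  have hu'u : u' ≠ u := huu'.symm
  have h3' : dist u' u ≤ r := by rwa [dist_comm]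
  obtain ⟨a1, a2, a3, a4⟩ := circle_pts r hr v u hvu h1
  obtain ⟨b1, b2, b3, b4⟩ := circle_pts r hr u' u hu'u h3'
  have hp : dist (ccwPt r v u) u' ≤ r := by
    have := hle ⟨(mem_closedBall.2 a2.le : ccwPt r v u ∈ Zd r u), (a1 : ccwPt r v u ∈ Zb r v)⟩
    exact mem_closedBall.1 this.1
  have hq : dist (cwPt r v u) u' ≤ r := by
    have := hle ⟨(mem_closedBall.2 a4.le : cwPt r v u ∈ Zd r u), (a3 : cwPt r v u ∈ Zb r v)⟩
    exact mem_closedBall.1 this.1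
  have hp' : dist (ccwPt r u' u) v ≤ r := by
    have := hcontra ⟨(mem_closedBall.2 b2.le : ccwPt r u' u ∈ Zd r u),
      (b1 : ccwPt r u' u ∈ Zb r u')⟩
    exact mem_closedBall.1 this.1
  have hq' : dist (cwPt r u' u) v ≤ r := by
    have := hcontra ⟨(mem_closedBall.2 b4.le : cwPt r u' u ∈ Zd r u),
      (b3 : cwPt r u' u ∈ Zb r u')⟩
    exact mem_closedBall.1 this.1
  have k1 : ⟪u' - v, u' - u⟫ ≤ 0 := key r hr v u u' hvu h1 hp hq
  have k2 : ⟪v - u', v - u⟫ ≤ 0 := key r hr u' u v hu'u h3' hp' hq'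
  have hsum : ⟪u' - v, u' - v⟫ = ⟪u' - v, u' - u⟫ + ⟪v - u', v - u⟫ := by
    simp only [inner_sub_left, inner_sub_right]
    ring
  have hz : ⟪u' - v, u' - v⟫ ≤ 0 := by rw [hsum]; linarith
  have : u' - v = 0 := by
    have := real_inner_self_nonneg (x := u' - v)
    have h0 : ⟪u' - v, u' - v⟫ = 0 := le_antisymm hz this
    exact inner_self_eq_zero.1 h0
  exact hvu' (by rwa [sub_eq_zero, eq_comm] at this)
end
end

section
/- For two distinct adjacent nodes v and u (i.e., points in the plane with distance at most r, and distance positive), u is a maximal neighbor of v if and only if v is a maximal neighbor of u, where maximality is with respect to the arc-containment partial order among neighbors in a finite point set V in general position. -/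
open Metric

noncomputable section

set_option maxHeartbeats 1000000 in
private lemma core1 (r d2 wx wy cx cy zx zy s : ℝ)
    (hd2 : wx^2 + wy^2 = d2) (hd2pos : 0 < d2) (hd2r : d2 ≤ r^2)
    (hs : 0 ≤ s) (hs2 : s^2 * d2 = r^2 - d2/4)
    (hp : (cx - wx/2 + s*wy)^2 + (cy - wy/2 - s*wx)^2 ≤ r^2)
    (hq : (cx - wx/2 - s*wy)^2 + (cy - wy/2 + s*wx)^2 ≤ r^2)
    (hz1 : (zx-wx)^2 + (zy-wy)^2 = r^2)
    (hz2 : zx^2 + zy^2 ≤ r^2) :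
    (zx-cx)^2 + (zy-cy)^2 ≤ r^2 := by
  subst hd2
  obtain ⟨A, hA⟩ : ∃ A, A = (wx^2+wy^2) - (cx*wx + cy*wy) := ⟨_, rfl⟩
  obtain ⟨B, hB⟩ : ∃ B, B = -cx*wy + cy*wx := ⟨_, rfl⟩
  obtain ⟨C, hC⟩ : ∃ C, C = (zx-wx)*wx + (zy-wy)*wy := ⟨_, rfl⟩
  obtain ⟨S, hS⟩ : ∃ S, S = -(zx-wx)*wy + (zy-wy)*wx := ⟨_, rfl⟩
  have hnp : (cx - wx/2)^2 + (cy - wy/2)^2 ≤ (wx^2+wy^2)/4 + 2*s*B := by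
    have hid : (cx - wx/2)^2 + (cy - wy/2)^2 = (cx - wx/2 + s*wy)^2 + (cy - wy/2 - s*wx)^2
        - s^2*(wx^2+wy^2) + 2*s*B := by rw [hB]; ring
    rw [hid]; linarith [hp, hs2]
  have hnq : (cx - wx/2)^2 + (cy - wy/2)^2 ≤ (wx^2+wy^2)/4 - 2*s*B := by
    have hid : (cx - wx/2)^2 + (cy - wy/2)^2 = (cx - wx/2 - s*wy)^2 + (cy - wy/2 + s*wx)^2
        - s^2*(wx^2+wy^2) - 2*s*B := by rw [hB]; ring
    rw [hid]; linarith [hq, hs2]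
  have hcm : ((wx^2+wy^2)/2 - A)^2 + B^2
      = ((cx - wx/2)^2 + (cy - wy/2)^2) * (wx^2+wy^2) := by
    rw [hA, hB]; ring
  have hnp' := mul_le_mul_of_nonneg_right hnp hd2pos.le
  have hnq' := mul_le_mul_of_nonneg_right hnq hd2pos.le
  rw [← hcm] at hnp' hnq'
  have hstarp : A^2 - (wx^2+wy^2)*A + B^2 - 2*s*(wx^2+wy^2)*B ≤ 0 := by linarith [hnp']
  have hstarq : A^2 - (wx^2+wy^2)*A + B^2 + 2*s*(wx^2+wy^2)*B ≤ 0 := by linarith [hnq']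
  have hApos : 0 ≤ A := by
    by_contra hcon
    push_neg at hcon
    have hwa : (wx^2+wy^2)*A < 0 := mul_neg_of_pos_of_neg hd2pos hcon
    linarith [hstarp, hstarq, sq_nonneg B, sq_nonneg A]
  have hCle : C ≤ -(wx^2+wy^2)/2 := by
    have hid : C = ((zx^2+zy^2) - ((zx-wx)^2 + (zy-wy)^2) - (wx^2+wy^2))/2 := by rw [hC]; ring
    rw [hid]; linarith [hz1, hz2]
  have hCS : C^2 + S^2 = r^2 * (wx^2+wy^2) := by
    rw [hC, hS]; linear_combination (wx^2+wy^2) * hz1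
  have hCC := mul_le_mul_of_nonneg_left hCle hd2pos.le
  have hs2' : s^2*(wx^2+wy^2)*(wx^2+wy^2) = (r^2 - (wx^2+wy^2)/4)*(wx^2+wy^2) := by
    linear_combination (wx^2+wy^2)*hs2
  have hSle : S^2 ≤ (s*(wx^2+wy^2))^2 := by
    have h1 : (wx^2+wy^2)^2/4 ≤ C^2 := by linarith [sq_nonneg (C + (wx^2+wy^2)/2), hCC]
    linarith [hCS, hs2', h1]
  have hsd : 0 ≤ s*(wx^2+wy^2) := by positivity
  have hSub : S ≤ s*(wx^2+wy^2) := by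
    by_contra hcon
    push_neg at hcon
    have := mul_self_lt_mul_self hsd hcon
    linarith [hSle, this]
  have hSlb : -(s*(wx^2+wy^2)) ≤ S := by
    by_contra hcon
    push_neg at hcon
    have := mul_self_lt_mul_self hsd (by linarith : s*(wx^2+wy^2) < -S)
    linarith [hSle, this]
  have hprod : A * (2*C + (wx^2+wy^2)) ≤ 0 :=
    mul_nonpos_of_nonneg_of_nonpos hApos (by linarith)
  have hfin : 2*(C*A - S*B) + A^2 + B^2 ≤ 0 := by
    rcases le_or_gt 0 B with hb | hb
    · have h := mul_le_mul_of_nonneg_right hSlb hb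
      linarith [hstarq, h, hprod]
    · have h := mul_le_mul_of_nonneg_right hSub (by linarith : (0:ℝ) ≤ -B)
      linarith [hstarp, h, hprod]
  have hgoal : ((zx-cx)^2 + (zy-cy)^2 - r^2) * (wx^2+wy^2)
      = 2*(C*A - S*B) + A^2 + B^2 + ((zx-wx)^2 + (zy-wy)^2 - r^2) * (wx^2+wy^2) := by
    rw [hA, hB, hC, hS]; ring
  rw [hz1] at hgoal
  have hle : ((zx-cx)^2 + (zy-cy)^2 - r^2) * (wx^2+wy^2) ≤ 0 := by
    rw [hgoal]; linarith [hfin]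
  by_contra hcon
  push_neg at hcon
  have : 0 < ((zx-cx)^2 + (zy-cy)^2 - r^2) * (wx^2+wy^2) := by
    apply mul_pos (by linarith) hd2pos
  linarith

set_option maxHeartbeats 1000000 in
private lemma core2 (r d2 wx wy cx cy s : ℝ)
    (hd2 : wx^2 + wy^2 = d2) (hd2pos : 0 < d2) (hd2r : d2 ≤ r^2)
    (hs : 0 ≤ s) (hs2 : s^2 * d2 = r^2 - d2/4)
    (hp : (cx - wx/2 + s*wy)^2 + (cy - wy/2 - s*wx)^2 ≤ r^2)
    (hq : (cx - wx/2 - s*wy)^2 + (cy - wy/2 + s*wx)^2 ≤ r^2) :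
    (cx-wx)^2 + (cy-wy)^2 ≤ r^2 := by
  subst hd2
  obtain ⟨A, hA⟩ : ∃ A, A = (wx^2+wy^2) - (cx*wx + cy*wy) := ⟨_, rfl⟩
  obtain ⟨B, hB⟩ : ∃ B, B = -cx*wy + cy*wx := ⟨_, rfl⟩
  have hnp : (cx - wx/2)^2 + (cy - wy/2)^2 ≤ (wx^2+wy^2)/4 + 2*s*B := by
    have hid : (cx - wx/2)^2 + (cy - wy/2)^2 = (cx - wx/2 + s*wy)^2 + (cy - wy/2 - s*wx)^2
        - s^2*(wx^2+wy^2) + 2*s*B := by rw [hB]; ring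
    rw [hid]; linarith [hp, hs2]
  have hnq : (cx - wx/2)^2 + (cy - wy/2)^2 ≤ (wx^2+wy^2)/4 - 2*s*B := by
    have hid : (cx - wx/2)^2 + (cy - wy/2)^2 = (cx - wx/2 - s*wy)^2 + (cy - wy/2 + s*wx)^2
        - s^2*(wx^2+wy^2) - 2*s*B := by rw [hB]; ring
    rw [hid]; linarith [hq, hs2]
  have hcm : ((wx^2+wy^2)/2 - A)^2 + B^2
      = ((cx - wx/2)^2 + (cy - wy/2)^2) * (wx^2+wy^2) := by
    rw [hA, hB]; ring
  have hnp' := mul_le_mul_of_nonneg_right hnp hd2pos.le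
  have hnq' := mul_le_mul_of_nonneg_right hnq hd2pos.le
  rw [← hcm] at hnp' hnq'
  have hstar : A^2 - (wx^2+wy^2)*A + B^2 ≤ 0 := by linarith [hnp', hnq']
  have hAle : A ≤ wx^2+wy^2 := by
    by_contra hcon
    push_neg at hcon
    have hApos : (0:ℝ) < A := lt_trans hd2pos hcon
    have := mul_lt_mul_of_pos_right hcon hApos
    linarith [hstar, sq_nonneg B, this]
  have hcu : ((cx-wx)^2 + (cy-wy)^2) * (wx^2+wy^2) = A^2 + B^2 := by
    rw [hA, hB]; ring
  have h1 : ((cx-wx)^2 + (cy-wy)^2) * (wx^2+wy^2) ≤ (wx^2+wy^2)*(wx^2+wy^2) := by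
    rw [hcu]
    have := mul_le_mul_of_nonneg_left hAle hd2pos.le
    linarith [hstar, this]
  have h2 : (cx-wx)^2 + (cy-wy)^2 ≤ wx^2+wy^2 := by
    by_contra hcon
    push_neg at hcon
    have : (wx^2+wy^2)*(wx^2+wy^2) < ((cx-wx)^2 + (cy-wy)^2) * (wx^2+wy^2) :=
      mul_lt_mul_of_pos_right hcon hd2pos
    linarith
  linarith [h2, hd2r]

private lemma dist_sq' (x y : Pt) : dist x y ^ 2 = (x 0 - y 0)^2 + (x 1 - y 1)^2 := by
  have h : (0:ℝ) ≤ ∑ i, dist (x i) (y i)^2 := by positivity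
  rw [EuclideanSpace.dist_eq, Real.sq_sqrt h, Fin.sum_univ_two, Real.dist_eq, Real.dist_eq,
    sq_abs, sq_abs]

private lemma dist_le_iff' (x y : Pt) {r : ℝ} (hr : 0 ≤ r) :
    dist x y ≤ r ↔ (x 0 - y 0)^2 + (x 1 - y 1)^2 ≤ r^2 := by
  rw [← dist_sq']
  exact ⟨fun h => pow_le_pow_left₀ dist_nonneg h 2,
    fun h => le_of_pow_le_pow_left₀ two_ne_zero hr h⟩

private lemma dist_eq_iff' (x y : Pt) {r : ℝ} (hr : 0 ≤ r) :
    dist x y = r ↔ (x 0 - y 0)^2 + (x 1 - y 1)^2 = r^2 := by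
  rw [← dist_sq']
  exact ⟨fun h => by rw [h],
    fun h => le_antisymm (le_of_pow_le_pow_left₀ two_ne_zero hr h.le)
      (le_of_pow_le_pow_left₀ two_ne_zero dist_nonneg h.ge)⟩

private lemma arc_both (r : ℝ) (hr : 0 < r) (v u c : Pt) (hne : u ≠ v) (hd : dist u v ≤ r)
    (h : arcLe r v u c) : arcLe r u v c ∧ dist c u ≤ r := by
  obtain ⟨wx, hwx⟩ : ∃ wx : ℝ, wx = u 0 - v 0 := ⟨_, rfl⟩
  obtain ⟨wy, hwy⟩ : ∃ wy : ℝ, wy = u 1 - v 1 := ⟨_, rfl⟩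
  have hd2 : dist u v ^ 2 = wx^2 + wy^2 := by rw [hwx, hwy]; exact dist_sq' u v
  have hd2pos : 0 < wx^2 + wy^2 := by
    rw [← hd2]; exact pow_pos (dist_pos.mpr hne) 2
  have hd2r : wx^2 + wy^2 ≤ r^2 := by
    rw [← hd2]; exact pow_le_pow_left₀ dist_nonneg hd 2
  obtain ⟨s, hsdef⟩ : ∃ s : ℝ, s = Real.sqrt ((r^2 - (wx^2+wy^2)/4)/(wx^2+wy^2)) := ⟨_, rfl⟩
  have hs : 0 ≤ s := hsdef ▸ Real.sqrt_nonneg _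
  have hs2 : s^2 * (wx^2+wy^2) = r^2 - (wx^2+wy^2)/4 := by
    rw [hsdef, Real.sq_sqrt (div_nonneg (by linarith) hd2pos.le)]
    field_simp
  -- the two intersection points of the circles around `v` and `u`
  obtain ⟨p, hp0, hp1⟩ : ∃ p : Pt, p 0 = v 0 + wx/2 - s*wy ∧ p 1 = v 1 + wy/2 + s*wx :=
    ⟨(WithLp.equiv 2 (Fin 2 → ℝ)).symm ![v 0 + wx/2 - s*wy, v 1 + wy/2 + s*wx], rfl, rfl⟩
  obtain ⟨q, hq0, hq1⟩ : ∃ q : Pt, q 0 = v 0 + wx/2 + s*wy ∧ q 1 = v 1 + wy/2 - s*wx :=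
    ⟨(WithLp.equiv 2 (Fin 2 → ℝ)).symm ![v 0 + wx/2 + s*wy, v 1 + wy/2 - s*wx], rfl, rfl⟩
  have hpv : dist p v = r := by
    have e0 : p 0 - v 0 = wx/2 - s*wy := by rw [hp0]; ring
    have e1 : p 1 - v 1 = wy/2 + s*wx := by rw [hp1]; ring
    rw [dist_eq_iff' _ _ hr.le, e0, e1]
    linear_combination hs2
  have hpu : dist p u = r := by
    have e0 : p 0 - u 0 = wx/2 - s*wy - wx := by rw [hp0, hwx]; ring
    have e1 : p 1 - u 1 = wy/2 + s*wx - wy := by rw [hp1, hwy]; ring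
    rw [dist_eq_iff' _ _ hr.le, e0, e1]
    linear_combination hs2
  have hqv : dist q v = r := by
    have e0 : q 0 - v 0 = wx/2 + s*wy := by rw [hq0]; ring
    have e1 : q 1 - v 1 = wy/2 - s*wx := by rw [hq1]; ring
    rw [dist_eq_iff' _ _ hr.le, e0, e1]
    linear_combination hs2
  have hqu : dist q u = r := by
    have e0 : q 0 - u 0 = wx/2 + s*wy - wx := by rw [hq0, hwx]; ring
    have e1 : q 1 - u 1 = wy/2 - s*wx - wy := by rw [hq1, hwy]; ring
    rw [dist_eq_iff' _ _ hr.le, e0, e1]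
    linear_combination hs2
  have hpc : dist p c ≤ r := by
    have hmem : p ∈ Zd r c ∩ Zb r v :=
      h ⟨by simpa [Zd] using hpu.le, by simp only [Zb, mem_sphere]; exact hpv⟩
    simpa [Zd] using hmem.1
  have hqc : dist q c ≤ r := by
    have hmem : q ∈ Zd r c ∩ Zb r v :=
      h ⟨by simpa [Zd] using hqu.le, by simp only [Zb, mem_sphere]; exact hqv⟩
    simpa [Zd] using hmem.1
  have hp' := (dist_le_iff' p c hr.le).mp hpc
  have hq' := (dist_le_iff' q c hr.le).mp hqc
  rw [hp0, hp1] at hp'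
  rw [hq0, hq1] at hq'
  have hpcore : ((c 0 - v 0) - wx/2 + s*wy)^2 + ((c 1 - v 1) - wy/2 - s*wx)^2 ≤ r^2 := by
    linarith [hp']
  have hqcore : ((c 0 - v 0) - wx/2 - s*wy)^2 + ((c 1 - v 1) - wy/2 + s*wx)^2 ≤ r^2 := by
    linarith [hq']
  constructor
  · rintro z ⟨hz1, hz2⟩
    refine ⟨?_, hz2⟩
    have hz1' : (z 0 - v 0)^2 + (z 1 - v 1)^2 ≤ r^2 :=
      (dist_le_iff' z v hr.le).mp (by simpa [Zd] using hz1)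
    have hz2' : (z 0 - u 0)^2 + (z 1 - u 1)^2 = r^2 :=
      (dist_eq_iff' z u hr.le).mp (by simpa only [Zb, mem_sphere] using hz2)
    have key := core1 r (wx^2+wy^2) wx wy (c 0 - v 0) (c 1 - v 1) (z 0 - v 0) (z 1 - v 1) s
      rfl hd2pos hd2r hs hs2 hpcore hqcore
      (by rw [hwx, hwy]; linarith [hz2']) hz1'
    simp only [Zd, mem_closedBall]
    rw [dist_le_iff' z c hr.le]
    linarith [key]
  · have key := core2 r (wx^2+wy^2) wx wy (c 0 - v 0) (c 1 - v 1) s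
      rfl hd2pos hd2r hs hs2 hpcore hqcore
    rw [hwx, hwy] at key
    rw [dist_le_iff' c u hr.le]
    linarith [key]

private lemma maxNbr_imp (V : Set Pt) (r : ℝ) (hr : 0 < r)
    (a b : Pt) (ha : a ∈ V) (hba : b ≠ a) (hd : dist b a ≤ r)
    (hmax : MaxNbr V r a b) : MaxNbr V r b a := by
  refine ⟨ha, ⟨hba.symm, by rwa [dist_comm]⟩, ?_⟩
  intro c hcV hca hnbr harc
  -- hnbr : Nbr r b c, harc : arcLe r b a c
  obtain ⟨harc', hcu⟩ := arc_both r hr b a c hba.symm (by rwa [dist_comm] at hd) harc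
  exact hmax.2.2 c hcV hnbr.1 ⟨hca, hcu⟩ harc'

/-- Lemma: maximality of neighbors is symmetric. -/
theorem stmt_3 (V : Set Pt) (hV : V.Finite) (hgp : GenPos V) (r : ℝ) (hr : 0 < r)
    (v u : Pt) (hv : v ∈ V) (hu : u ∈ V) (hne : u ≠ v) (hd : dist u v ≤ r) :
    MaxNbr V r v u ↔ MaxNbr V r u v :=
  ⟨maxNbr_imp V r hr v u hv hne hd,
   maxNbr_imp V r hr u v hu hne.symm (by rwa [dist_comm] at hd)⟩
end
end
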